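/- Let a > 1 and let u : [0,∞) → ℝ be twice differentiable with u(0) = 1, u bounded on [0,∞), and u''(t) = k(t) u(t) where 1 ≤ k(t) ≤ a² for all t ≥ 0, and u(t) > 0 for all t ≥ 0. Then e^{−a t} ≤ u(t) ≤ e^{−t} for all t ≥ 0. -/

import Mathlib

private lemma monoAux {c : ℝ} {F F' : ℝ → ℝ}
    (hF : ∀ t ∈ Set.Ici c, HasDerivAt F (F' t) t)
    (h0 : ∀ t ∈ Set.Ici c, 0 ≤ F' t) : MonotoneOn F (Set.Ici c) := by
  apply monotoneOn_of_deriv_nonneg (convex_Ici c)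
  · exact fun x hx => (hF x hx).continuousAt.continuousWithinAt
  · intro x hx
    rw [interior_Ici] at hx
    exact (hF x (Set.mem_Ici.mpr (le_of_lt (Set.mem_Ioi.mp hx)))).differentiableAt.differentiableWithinAt
  · intro x hx
    rw [interior_Ici] at hx
    rw [(hF x (Set.mem_Ici.mpr (le_of_lt (Set.mem_Ioi.mp hx)))).deriv]
    exact h0 x (Set.mem_Ici.mpr (le_of_lt (Set.mem_Ioi.mp hx)))

private lemma antiAux {c : ℝ} {F F' : ℝ → ℝ}
    (hF : ∀ t ∈ Set.Ici c, HasDerivAt F (F' t) t)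
    (h0 : ∀ t ∈ Set.Ici c, F' t ≤ 0) : AntitoneOn F (Set.Ici c) := by
  have H := monoAux (F := fun t => -F t) (F' := fun t => -F' t)
    (fun t ht => (hF t ht).neg) (fun t ht => neg_nonneg.mpr (h0 t ht))
  intro x hx y hy hxy
  have := H hx hy hxy
  simp only at this
  linarith

/-- Sturm/Riccati comparison: a bounded positive solution of `u'' = k·u` with
`1 ≤ k ≤ a²` on `[0,∞)` and `u(0) = 1` satisfies `e^{−at} ≤ u(t) ≤ e^{−t}`. -/
theorem stmt_10 (a : ℝ) (ha : 1 < a) (u u' u'' k : ℝ → ℝ)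
    (hu : ∀ t ∈ Set.Ici (0 : ℝ), HasDerivAt u (u' t) t)
    (hu' : ∀ t ∈ Set.Ici (0 : ℝ), HasDerivAt u' (u'' t) t)
    (hode : ∀ t ≥ (0 : ℝ), u'' t = k t * u t)
    (hk : ∀ t ≥ (0 : ℝ), 1 ≤ k t ∧ k t ≤ a ^ 2)
    (hu0 : u 0 = 1)
    (hpos : ∀ t ≥ (0 : ℝ), 0 < u t)
    (hbdd : ∃ Cb : ℝ, ∀ t ≥ (0 : ℝ), |u t| ≤ Cb) :
    ∀ t ≥ (0 : ℝ), Real.exp (-(a * t)) ≤ u t ∧ u t ≤ Real.exp (-t) := by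
  obtain ⟨Cb, hCb⟩ := hbdd
  have hCb1 : (1 : ℝ) ≤ Cb := by
    have := hCb 0 le_rfl
    rw [hu0] at this
    simpa using this
  have ha0 : (0 : ℝ) < a := by linarith
  -- Step 1: u' ≤ 0 on [0, ∞)
  have hu'nonpos : ∀ t ≥ (0 : ℝ), u' t ≤ 0 := by
    intro t0 ht0
    by_contra h
    push_neg at h
    -- u' is monotone on [t0, ∞) since u'' = k u > 0
    have hmono : MonotoneOn u' (Set.Ici t0) := by
      apply monoAux (F' := u'')
      · exact fun t ht => hu' t (le_trans ht0 ht)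
      · intro t ht
        have ht' : (0:ℝ) ≤ t := le_trans ht0 ht
        rw [hode t ht']
        have := (hk t ht').1
        have := hpos t ht'
        positivity
    -- hence u grows linearly: G t = u t - u' t0 * t is monotone
    have hGmono : MonotoneOn (fun t => u t - u' t0 * t) (Set.Ici t0) := by
      apply monoAux (F' := fun t => u' t - u' t0)
      · intro t ht
        exact ((hu t (le_trans ht0 ht)).sub ((hasDerivAt_id' t).const_mul (u' t0))).congr_deriv (by ring)
      · intro t ht
        have := hmono Set.self_mem_Ici ht ht
        linarith
    have hq : (0:ℝ) ≤ (2 * Cb + 1) / u' t0 := div_nonneg (by linarith) (le_of_lt h)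
    set t1 := t0 + (2 * Cb + 1) / u' t0 with ht1def
    have ht1 : t0 ≤ t1 := le_add_of_nonneg_right hq
    have hmid := hGmono Set.self_mem_Ici (Set.mem_Ici.mpr ht1) ht1
    try simp only at hmid
    have hval : u' t0 * t1 - u' t0 * t0 = 2 * Cb + 1 := by
      rw [ht1def]
      field_simp
      ring
    have h1 : u t0 + (2 * Cb + 1) ≤ u t1 := by linarith
    have h2 := abs_le.mp (hCb t0 ht0)
    have h3 := abs_le.mp (hCb t1 (le_trans ht0 ht1))
    linarith
  -- Step 2: u' + u ≤ 0 on [0, ∞)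
  have hf : ∀ t ≥ (0 : ℝ), u' t + u t ≤ 0 := by
    intro t0 ht0
    by_contra h
    push_neg at h
    -- H t = (u' t + u t) * exp (-t) is monotone on [t0, ∞)
    have hHmono : MonotoneOn (fun t => (u' t + u t) * Real.exp (-t)) (Set.Ici t0) := by
      apply monoAux (F' := fun t => (u'' t + u' t) * Real.exp (-t)
        + (u' t + u t) * (Real.exp (-t) * (-1)))
      · intro t ht
        have ht' : (0:ℝ) ≤ t := le_trans ht0 ht
        have hexp : HasDerivAt (fun t : ℝ => Real.exp (-t)) (Real.exp (-t) * (-1)) t :=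
          (Real.hasDerivAt_exp (-t)).comp t ((hasDerivAt_id t).neg)
        exact ((hu' t ht').add (hu t ht')).mul hexp
      · intro t ht
        have ht' : (0:ℝ) ≤ t := le_trans ht0 ht
        have hkt := (hk t ht').1
        have hut := hpos t ht'
        have hexp := Real.exp_pos (-t)
        have hderiv : u' t + u t ≤ u'' t + u' t := by
          rw [hode t ht']
          nlinarith [mul_nonneg (by linarith : (0:ℝ) ≤ k t - 1) (le_of_lt hut)]
        have heq : (u'' t + u' t) * Real.exp (-t) + (u' t + u t) * (Real.exp (-t) * (-1))
            = ((u'' t + u' t) - (u' t + u t)) * Real.exp (-t) := by ring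
        rw [heq]
        exact mul_nonneg (by linarith) (le_of_lt hexp)
    -- so (u' + u) t ≥ (u' t0 + u t0) * exp (t - t0)
    have key : ∀ t ≥ t0, (u' t0 + u t0) * Real.exp (t - t0) ≤ u' t + u t := by
      intro t ht
      have hmid := hHmono Set.self_mem_Ici (Set.mem_Ici.mpr ht) ht
      try simp only at hmid
      have hee : Real.exp (t - t0) * Real.exp (-t) = Real.exp (-t0) := by
        rw [← Real.exp_add]; congr 1; ring
      refine le_of_mul_le_mul_right ?_ (Real.exp_pos (-t))
      calc (u' t0 + u t0) * Real.exp (t - t0) * Real.exp (-t)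
          = (u' t0 + u t0) * Real.exp (-t0) := by rw [mul_assoc, hee]
        _ ≤ (u' t + u t) * Real.exp (-t) := hmid
    set c := u' t0 + u t0 with hcdef
    have hq : (0:ℝ) ≤ Cb / c := div_nonneg (by linarith) (le_of_lt h)
    set t1 := t0 + Cb / c with ht1def
    have ht1 : t0 ≤ t1 := le_add_of_nonneg_right hq
    have h1 := key t1 ht1
    have h3 : t1 - t0 = Cb / c := by rw [ht1def]; ring
    have h4 : c * (Cb / c + 1) ≤ c * Real.exp (t1 - t0) := by
      apply mul_le_mul_of_nonneg_left _ (le_of_lt h)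
      rw [h3]
      linarith [Real.add_one_le_exp (Cb / c)]
    have h5 : c * (Cb / c + 1) = Cb + c := by
      field_simp
    have h6 : u' t1 ≤ 0 := hu'nonpos t1 (le_trans ht0 ht1)
    have h7 : u t1 ≤ Cb := (abs_le.mp (hCb t1 (le_trans ht0 ht1))).2
    clear_value c t1
    linarith
  -- Step 3: u' + a * u ≥ 0 on [0, ∞)
  have hg : ∀ t ≥ (0 : ℝ), 0 ≤ u' t + a * u t := by
    intro t0 ht0
    by_contra h
    push_neg at h
    -- K t = (u' t + a * u t) * exp (-(a*t)) is antitone on [t0, ∞)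
    have hKanti : AntitoneOn (fun t => (u' t + a * u t) * Real.exp (-(a*t))) (Set.Ici t0) := by
      apply antiAux (F' := fun t => (u'' t + a * u' t) * Real.exp (-(a*t))
        + (u' t + a * u t) * (Real.exp (-(a*t)) * (-a)))
      · intro t ht
        have ht' : (0:ℝ) ≤ t := le_trans ht0 ht
        have hexp : HasDerivAt (fun t : ℝ => Real.exp (-(a*t))) (Real.exp (-(a*t)) * (-a)) t := by
          have h1 : HasDerivAt (fun t : ℝ => -(a*t)) (-a) t := by
            exact ((hasDerivAt_id' t).const_mul a).neg.congr_deriv (by ring)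
          exact (Real.hasDerivAt_exp (-(a*t))).comp t h1
        exact ((hu' t ht').add ((hu t ht').const_mul a)).mul hexp
      · intro t ht
        have ht' : (0:ℝ) ≤ t := le_trans ht0 ht
        have hkt := (hk t ht').2
        have hut := hpos t ht'
        have hexp := Real.exp_pos (-(a*t))
        have hderiv : u'' t + a * u' t ≤ a * (u' t + a * u t) := by
          rw [hode t ht']
          nlinarith [mul_nonneg (by linarith : (0:ℝ) ≤ a^2 - k t) (le_of_lt hut)]
        have heq : (u'' t + a * u' t) * Real.exp (-(a*t))
              + (u' t + a * u t) * (Real.exp (-(a*t)) * (-a))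
            = ((u'' t + a * u' t) - a * (u' t + a * u t)) * Real.exp (-(a*t)) := by ring
        rw [heq]
        exact mul_nonpos_of_nonpos_of_nonneg (by linarith) (le_of_lt hexp)
    -- so g t ≤ g t0 < 0 for t ≥ t0
    have key : ∀ t ≥ t0, u' t + a * u t ≤ u' t0 + a * u t0 := by
      intro t ht
      have h1 := hKanti Set.self_mem_Ici (Set.mem_Ici.mpr ht) ht
      try simp only at h1
      have h2 : Real.exp (-(a*t)) ≤ Real.exp (-(a*t0)) := by
        apply Real.exp_le_exp.mpr
        nlinarith
      have hexpt := Real.exp_pos (-(a*t))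
      have hexpt0 := Real.exp_pos (-(a*t0))
      by_contra hcon
      push_neg at hcon
      rcases le_or_gt (u' t + a * u t) 0 with hgt | hgt
      · nlinarith [mul_lt_mul_of_pos_right hcon hexpt0,
          mul_le_mul_of_nonpos_left h2 hgt]
      · nlinarith [mul_pos hgt hexpt, mul_neg_of_neg_of_pos h hexpt0]
    set c := u' t0 + a * u t0 with hcdef
    have hLanti : AntitoneOn (fun t => u t - c * t) (Set.Ici t0) := by
      apply antiAux (F' := fun t => u' t - c)
      · intro t ht
        exact ((hu t (le_trans ht0 ht)).sub ((hasDerivAt_id' t).const_mul c)).congr_deriv (by ring)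
      · intro t ht
        have ht' : (0:ℝ) ≤ t := le_trans ht0 ht
        have h1 := key t ht
        have h2 : 0 < u t := hpos t ht'
        nlinarith
    have hut0 := hpos t0 ht0
    have hq : (0:ℝ) ≤ u t0 / (-c) := div_nonneg (le_of_lt hut0) (by linarith)
    set t1 := t0 + u t0 / (-c) with ht1def
    have ht1 : t0 ≤ t1 := le_add_of_nonneg_right hq
    have h1 := hLanti Set.self_mem_Ici (Set.mem_Ici.mpr ht1) ht1
    try simp only at h1
    have hc0 : c ≠ 0 := ne_of_lt h
    clear_value c t1
    have h2 : c * t1 - c * t0 = -u t0 := by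
      rw [ht1def, div_neg]
      field_simp
      ring
    have h3 : u t1 ≤ 0 := by linarith
    have := hpos t1 (le_trans ht0 ht1)
    linarith
  -- Step 4: conclude
  intro t ht
  constructor
  · -- lower bound: N t = u t * exp (a t) is monotone, N 0 = 1
    have hNmono : MonotoneOn (fun t => u t * Real.exp (a*t)) (Set.Ici (0:ℝ)) := by
      apply monoAux (F' := fun t => u' t * Real.exp (a*t) + u t * (Real.exp (a*t) * a))
      · intro t ht
        have hexp : HasDerivAt (fun t : ℝ => Real.exp (a*t)) (Real.exp (a*t) * a) t := by
          have h1 : HasDerivAt (fun t : ℝ => a*t) a t := by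
            simpa using (hasDerivAt_id t).const_mul a
          exact (Real.hasDerivAt_exp (a*t)).comp t h1
        exact (hu t ht).mul hexp
      · intro s hs
        have h1 := hg s hs
        have h2 := Real.exp_pos (a*s)
        have heq : u' s * Real.exp (a*s) + u s * (Real.exp (a*s) * a)
            = (u' s + a * u s) * Real.exp (a*s) := by ring
        rw [heq]
        exact mul_nonneg h1 (le_of_lt h2)
    have hm := hNmono Set.self_mem_Ici (Set.mem_Ici.mpr ht) ht
    simp only [mul_zero, Real.exp_zero, mul_one, hu0] at hm
    have hmul : Real.exp (-(a*t)) * Real.exp (a*t) = 1 := by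
      rw [← Real.exp_add]; simp
    nlinarith [Real.exp_pos (a*t)]
  · -- upper bound: M t = u t * exp t is antitone, M 0 = 1
    have hManti : AntitoneOn (fun t => u t * Real.exp t) (Set.Ici (0:ℝ)) := by
      apply antiAux (F' := fun t => u' t * Real.exp t + u t * Real.exp t)
      · intro t ht
        exact (hu t ht).mul (Real.hasDerivAt_exp t)
      · intro s hs
        have h1 := hf s hs
        have h2 := Real.exp_pos s
        have heq : u' s * Real.exp s + u s * Real.exp s
            = (u' s + u s) * Real.exp s := by ring
        rw [heq]
        exact mul_nonpos_of_nonpos_of_nonneg h1 (le_of_lt h2)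
    have hm := hManti Set.self_mem_Ici (Set.mem_Ici.mpr ht) ht
    simp only [Real.exp_zero, mul_one, hu0] at hm
    have hmul : Real.exp (-t) * Real.exp t = 1 := by
      rw [← Real.exp_add]; simp
    nlinarith [Real.exp_pos t]
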